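/- (Sufficient condition for confinement: diverging g at a horizon.) Let s_T > 0, let f : [s_T, ∞) → ℝ be continuously differentiable with f(s_T) > 0 and f′(s) > 0 for all s ≥ s_T, and let g(s) = h(s)/√(s − s_T) for s > s_T, where h : [s_T, ∞) → ℝ is continuous, nonnegative, and h(s_T) > 0. Assume ∫^{∞} g(s)/f(s)² ds < ∞. For s₀ > s_T define L(s₀) = 2∫_{s₀}^{∞} (g(s)/f(s))·f(s₀)/√(f(s)² − f(s₀)²) ds and E(s₀) = f(s₀)·L(s₀) + 2∫_{s₀}^{∞} (g(s)/f(s))·( √(f(s)² − f(s₀)²) − f(s) ) ds − 2∫_{s_T}^{s₀} g(s) ds. Then L(s₀) → ∞ as s₀ → s_T⁺ and E(s₀)/L(s₀) → f(s_T) as s₀ → s_T⁺; i.e. the Wilson loop exhibits area-law (linearly confining) behavior with string tension f(s_T). -/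

import Mathlib

open MeasureTheory Real Set Filter


/-- Integrability on `Ioc a b` of a function bounded by `C/√(s-a)`. -/
lemma aux_integrableOn_of_inv_sqrt_bound {a b C : ℝ} {φ : ℝ → ℝ}
    (hφ : ContinuousOn φ (Ioc a b))
    (hb : ∀ s ∈ Ioc a b, ‖φ s‖ ≤ C / Real.sqrt (s - a)) :
    IntegrableOn φ (Ioc a b) := by
  rcases le_or_gt b a with hba | hab
  · rw [Ioc_eq_empty (not_lt.2 hba)]; exact integrableOn_empty
  have h1 : IntervalIntegrable (fun x : ℝ => x ^ (-(1/2) : ℝ)) volume 0 (b - a) :=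
    intervalIntegral.intervalIntegrable_rpow' (by norm_num)
  have h2 : IntervalIntegrable (fun x : ℝ => (x - a) ^ (-(1/2) : ℝ)) volume a b := by
    have := h1.comp_sub_right a
    simpa using this
  have h3 : IntervalIntegrable (fun x : ℝ => C * (x - a) ^ (-(1/2) : ℝ)) volume a b :=
    h2.const_mul C
  have hψ : IntegrableOn (fun x : ℝ => C * (x - a) ^ (-(1/2) : ℝ)) (Ioc a b) :=
    (intervalIntegrable_iff_integrableOn_Ioc_of_le hab.le).1 h3
  refine Integrable.mono hψ (hφ.aestronglyMeasurable measurableSet_Ioc) ?_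
  rw [ae_restrict_iff' measurableSet_Ioc]
  refine ae_of_all _ fun s hs => ?_
  have hsa : 0 < s - a := sub_pos.2 hs.1
  have : C / Real.sqrt (s - a) = C * (s - a) ^ (-(1/2) : ℝ) := by
    rw [Real.sqrt_eq_rpow, Real.rpow_neg hsa.le, div_eq_mul_inv]
  calc ‖φ s‖ ≤ C / Real.sqrt (s - a) := hb s hs
    _ = C * (s - a) ^ (-(1/2) : ℝ) := this
    _ ≤ ‖C * (s - a) ^ (-(1/2) : ℝ)‖ := le_abs_self _

lemma aux_hasDerivAt {sT : ℝ} {f : ℝ → ℝ} (hf : ContDiffOn ℝ 1 f (Ici sT))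
    {z : ℝ} (hz : sT < z) : HasDerivAt f (derivWithin f (Ici sT) z) z := by
  have h1 : DifferentiableWithinAt ℝ f (Ici sT) z :=
    (hf.differentiableOn one_ne_zero) z (mem_Ici.2 hz.le)
  exact h1.hasDerivWithinAt.hasDerivAt (Ici_mem_nhds hz)

lemma aux_lin_lower {sT d μ : ℝ} {f : ℝ → ℝ} (hf : ContDiffOn ℝ 1 f (Ici sT))
    (hμ : ∀ x ∈ Ioo sT d, μ ≤ derivWithin f (Ici sT) x) :
    ∀ x y, sT ≤ x → x ≤ y → y ≤ d → μ * (y - x) ≤ f y - f x := by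
  intro x y hx hxy hyd
  have hmono : MonotoneOn (fun s => f s - μ * s) (Icc sT d) := by
    apply monotoneOn_of_deriv_nonneg (convex_Icc sT d)
    · exact (hf.continuousOn.mono Icc_subset_Ici_self).sub
        (continuous_const.mul continuous_id).continuousOn
    · intro z hz
      rw [interior_Icc] at hz
      exact ((aux_hasDerivAt hf hz.1).sub
        ((hasDerivAt_id z).const_mul μ)).differentiableAt.differentiableWithinAt
    · intro z hz
      rw [interior_Icc] at hz
      have hd : HasDerivAt (fun s => f s - μ * s) (derivWithin f (Ici sT) z - μ * 1) z :=
        (aux_hasDerivAt hf hz.1).sub ((hasDerivAt_id z).const_mul μ)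
      rw [hd.deriv]
      have := hμ z hz
      linarith
  have := hmono (mem_Icc.2 ⟨hx, hxy.trans hyd⟩) (mem_Icc.2 ⟨hx.trans hxy, hyd⟩) hxy
  simp only at this
  linarith

lemma aux_lin_upper {sT d M : ℝ} {f : ℝ → ℝ} (hf : ContDiffOn ℝ 1 f (Ici sT))
    (hM : ∀ x ∈ Ioo sT d, derivWithin f (Ici sT) x ≤ M) :
    ∀ x y, sT ≤ x → x ≤ y → y ≤ d → f y - f x ≤ M * (y - x) := by
  intro x y hx hxy hyd
  have hmono : MonotoneOn (fun s => M * s - f s) (Icc sT d) := by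
    apply monotoneOn_of_deriv_nonneg (convex_Icc sT d)
    · exact (continuous_const.mul continuous_id).continuousOn.sub
        (hf.continuousOn.mono Icc_subset_Ici_self)
    · intro z hz
      rw [interior_Icc] at hz
      exact (((hasDerivAt_id z).const_mul M).sub
        (aux_hasDerivAt hf hz.1)).differentiableAt.differentiableWithinAt
    · intro z hz
      rw [interior_Icc] at hz
      have hd : HasDerivAt (fun s => M * s - f s) (M * 1 - derivWithin f (Ici sT) z) z :=
        ((hasDerivAt_id z).const_mul M).sub (aux_hasDerivAt hf hz.1)
      rw [hd.deriv]
      have := hM z hz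
      linarith
  have := hmono (mem_Icc.2 ⟨hx, hxy.trans hyd⟩) (mem_Icc.2 ⟨hx.trans hxy, hyd⟩) hxy
  simp only at this
  linarith

lemma aux_log_integral {sT a b : ℝ} (ha : sT < a) (hab : a ≤ b) :
    ∫ s in Ioc a b, (s - sT)⁻¹ = Real.log (b - sT) - Real.log (a - sT) := by
  have h1 : ∫ s in Ioc a b, (s - sT)⁻¹ = ∫ s in a..b, (s - sT)⁻¹ :=
    (intervalIntegral.integral_of_le hab).symm
  rw [h1, intervalIntegral.integral_comp_sub_right (fun x => x⁻¹) sT,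
    integral_inv, Real.log_div (by linarith) (by linarith)]
  intro h0
  rcases h0 with ⟨h0a, h0b⟩
  rw [inf_le_iff] at h0a
  rcases h0a with h | h <;> linarith

set_option maxHeartbeats 1000000 in
theorem horizon_divergent_g_confinement (sT : ℝ) (hsT : 0 < sT)
    (f g h L E : ℝ → ℝ)
    (hf : ContDiffOn ℝ 1 f (Ici sT)) (hfT : 0 < f sT)
    (hf' : ∀ s ∈ Ici sT, 0 < derivWithin f (Ici sT) s)
    (hgdef : ∀ s, sT < s → g s = h s / Real.sqrt (s - sT))
    (hh : ContinuousOn h (Ici sT)) (hhnn : ∀ s ∈ Ici sT, 0 ≤ h s) (hhT : 0 < h sT)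
    (hint : ∃ c : ℝ, sT < c ∧ IntegrableOn (fun s => g s / (f s) ^ 2) (Ioi c))
    (hL : ∀ s₀, L s₀ = 2 * ∫ s in Ioi s₀,
      (g s / f s) * f s₀ / Real.sqrt ((f s) ^ 2 - (f s₀) ^ 2))
    (hE : ∀ s₀, E s₀ = f s₀ * L s₀
      + 2 * (∫ s in Ioi s₀, (g s / f s) * (Real.sqrt ((f s) ^ 2 - (f s₀) ^ 2) - f s))
      - 2 * ∫ s in Ioo sT s₀, g s) :
    Tendsto L (nhdsWithin sT (Ioi sT)) atTop ∧
    Tendsto (fun s₀ => E s₀ / L s₀) (nhdsWithin sT (Ioi sT)) (nhds (f sT)) := by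
  obtain ⟨c, hc, hcint⟩ := hint
  -- basic facts about f
  have hfmono : StrictMonoOn f (Ici sT) := by
    apply strictMonoOn_of_deriv_pos (convex_Ici sT) hf.continuousOn
    intro x hx
    rw [interior_Ici] at hx
    rw [← derivWithin_of_mem_nhds (Ici_mem_nhds hx)]
    exact hf' x (mem_Ici.2 (le_of_lt hx))
  have hfpos : ∀ s, sT ≤ s → 0 < f s := fun s hs =>
    lt_of_lt_of_le hfT (hfmono.monotoneOn self_mem_Ici (mem_Ici.2 hs) hs)
  have hfle : ∀ x y, sT ≤ x → x ≤ y → f x ≤ f y := fun x y hx hxy =>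
    hfmono.monotoneOn (mem_Ici.2 hx) (mem_Ici.2 (hx.trans hxy)) hxy
  -- continuity and nonnegativity of g
  have hgcont : ContinuousOn g (Ioi sT) := by
    have hcont : ContinuousOn (fun s => h s / Real.sqrt (s - sT)) (Ioi sT) := by
      apply ContinuousOn.div (hh.mono Ioi_subset_Ici_self)
        ((Real.continuous_sqrt.comp (continuous_id.sub continuous_const)).continuousOn)
      intro x hx
      exact (Real.sqrt_pos.2 (sub_pos.2 hx)).ne'
    exact hcont.congr fun s hs => hgdef s hs
  have hgnn : ∀ s, sT < s → 0 ≤ g s := fun s hs => by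
    rw [hgdef s hs]; exact div_nonneg (hhnn s hs.le) (Real.sqrt_nonneg _)
  -- continuity of the derivative
  have hf'cont : ContinuousOn (derivWithin f (Ici sT)) (Ici sT) :=
    hf.continuousOn_derivWithin (uniqueDiffOn_Ici sT) le_rfl
  -- choice of b : h ≥ h sT / 2 on [sT, b]
  have hev : {s | h sT / 2 < h s} ∈ nhdsWithin sT (Ici sT) :=
    (hh sT self_mem_Ici).eventually (eventually_gt_nhds (by linarith))
  obtain ⟨b, hsTb, hbsub⟩ := mem_nhdsGE_iff_exists_Icc_subset.1 hev
  set d : ℝ := max b c + 1 with hd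
  have hbd : b < d := lt_of_le_of_lt (le_max_left _ _) (lt_add_one _)
  have hcd : c < d := lt_of_le_of_lt (le_max_right _ _) (lt_add_one _)
  have hsTd : sT < d := hsTb.trans hbd
  -- max of h on [sT, d]
  obtain ⟨zH, hzH, hzHmax⟩ := isCompact_Icc.exists_isMaxOn (nonempty_Icc.2 hsTd.le)
    (hh.mono Icc_subset_Ici_self)
  set Hd := h zH with hHddef
  have hHd : ∀ s ∈ Icc sT d, h s ≤ Hd := fun s hs => isMaxOn_iff.1 hzHmax s hs
  have hHdpos : 0 < Hd := lt_of_lt_of_le hhT (hHd sT ⟨le_rfl, hsTd.le⟩)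
  -- min and max of f' on [sT, d]
  obtain ⟨zμ, hzμ, hzμmin⟩ := isCompact_Icc.exists_isMinOn (nonempty_Icc.2 hsTd.le)
    (hf'cont.mono Icc_subset_Ici_self)
  set μ := derivWithin f (Ici sT) zμ with hμdef
  have hμpos : 0 < μ := hf' zμ (mem_Ici.2 hzμ.1)
  have hμle : ∀ x ∈ Icc sT d, μ ≤ derivWithin f (Ici sT) x := fun x hx => isMinOn_iff.1 hzμmin x hx
  obtain ⟨zM, hzM, hzMmax⟩ := isCompact_Icc.exists_isMaxOn (nonempty_Icc.2 hsTd.le)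
    (hf'cont.mono Icc_subset_Ici_self)
  set M := derivWithin f (Ici sT) zM with hMdef
  have hMpos : 0 < M := hf' zM (mem_Ici.2 hzM.1)
  have hMge : ∀ x ∈ Icc sT d, derivWithin f (Ici sT) x ≤ M := fun x hx => isMaxOn_iff.1 hzMmax x hx
  have hlow := aux_lin_lower hf (fun x hx => hμle x (Ioo_subset_Icc_self hx))
  have hupp := aux_lin_upper hf (fun x hx => hMge x (Ioo_subset_Icc_self hx))
  have hfbpos : 0 < f b := hfpos b hsTb.le
  have hfdpos : 0 < f d := hfpos d hsTd.le
  have hfbfd : f b < f d := hfmono (mem_Ici.2 hsTb.le) (mem_Ici.2 hsTd.le) hbd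
  set ρ : ℝ := 1 - (f b / f d) ^ 2 with hρdef
  have hρpos : 0 < ρ := by
    have h1 : (f b / f d) ^ 2 < 1 := by
      have : f b / f d < 1 := (div_lt_one hfdpos).2 hfbfd
      have h0 : 0 ≤ f b / f d := div_nonneg hfbpos.le hfdpos.le
      nlinarith
    simp only [hρdef]; linarith
  -- continuity of the L-integrand
  have hGcont : ∀ s₀, sT < s₀ → ContinuousOn
      (fun s => g s / f s * f s₀ / Real.sqrt (f s ^ 2 - f s₀ ^ 2)) (Ioi s₀) := by
    intro s₀ hs₀
    have hsub : Ioi s₀ ⊆ Ioi sT := Ioi_subset_Ioi hs₀.le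
    have hsub2 : Ioi s₀ ⊆ Ici sT := fun x hx => (hs₀.trans hx).le
    apply ContinuousOn.div
    · exact ((hgcont.mono hsub).div (hf.continuousOn.mono hsub2)
        fun x hx => (hfpos x (hsub2 hx)).ne').mul continuousOn_const
    · exact Real.continuous_sqrt.comp_continuousOn
        (((hf.continuousOn.mono hsub2).pow 2).sub continuousOn_const)
    · intro x hx
      have h1 : f s₀ < f x := hfmono (mem_Ici.2 hs₀.le) (hsub2 hx) hx
      have h2 : 0 < f x ^ 2 - f s₀ ^ 2 := by nlinarith [hfpos s₀ hs₀.le]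
      exact (Real.sqrt_pos.2 h2).ne'
  -- nonnegativity of the L-integrand
  have hGnn : ∀ s₀, sT < s₀ → ∀ s ∈ Ioi s₀,
      0 ≤ g s / f s * f s₀ / Real.sqrt (f s ^ 2 - f s₀ ^ 2) := by
    intro s₀ hs₀ s hs
    exact div_nonneg (mul_nonneg (div_nonneg (hgnn s (hs₀.trans hs))
      (hfpos s (hs₀.trans hs).le).le) (hfpos s₀ hs₀.le).le) (Real.sqrt_nonneg _)
  -- integrability of the L-integrand
  have hGint : ∀ s₀ ∈ Ioo sT b, IntegrableOn
      (fun s => g s / f s * f s₀ / Real.sqrt (f s ^ 2 - f s₀ ^ 2)) (Ioi s₀) := by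
    intro s₀ hs₀
    have hs₀d : s₀ < d := hs₀.2.trans hbd
    rw [← Ioc_union_Ioi_eq_Ioi hs₀d.le]
    have hsqμ : 0 < Real.sqrt (μ * f sT) := Real.sqrt_pos.2 (by positivity)
    have hsq0 : 0 < Real.sqrt (s₀ - sT) := Real.sqrt_pos.2 (sub_pos.2 hs₀.1)
    apply IntegrableOn.union
    · -- the part (s₀, d]
      apply aux_integrableOn_of_inv_sqrt_bound
        (C := Hd / Real.sqrt (s₀ - sT) / f sT * f d / Real.sqrt (μ * f sT))
        ((hGcont s₀ hs₀.1).mono Ioc_subset_Ioi_self)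
      intro s hs
      have hssT : sT < s := hs₀.1.trans hs.1
      have hfs : 0 < f s := hfpos s hssT.le
      have hfs0 : 0 < f s₀ := hfpos s₀ hs₀.1.le
      have hnn := hGnn s₀ hs₀.1 s hs.1
      rw [Real.norm_eq_abs, abs_of_nonneg hnn]
      -- numerator bound
      have hnum : g s / f s * f s₀ ≤ Hd / Real.sqrt (s₀ - sT) / f sT * f d := by
        have hg1 : g s ≤ Hd / Real.sqrt (s₀ - sT) := by
          rw [hgdef s hssT]
          apply div_le_div₀ hHdpos.le (hHd s ⟨hssT.le, hs.2⟩) hsq0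
          exact Real.sqrt_le_sqrt (by linarith [hs.1])
        have h2 : g s / f s ≤ Hd / Real.sqrt (s₀ - sT) / f sT :=
          div_le_div₀ (by positivity) hg1 hfT (hfle sT s le_rfl hssT.le)
        exact mul_le_mul h2 (hfle s₀ d hs₀.1.le (hs₀d.le)) hfs0.le (by positivity)
      -- denominator bound
      have hden : Real.sqrt (μ * f sT) * Real.sqrt (s - s₀) ≤
          Real.sqrt (f s ^ 2 - f s₀ ^ 2) := by
        rw [← Real.sqrt_mul (by positivity)]
        apply Real.sqrt_le_sqrt
        have h1 : μ * (s - s₀) ≤ f s - f s₀ := hlow s₀ s hs₀.1.le hs.1.le hs.2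
        have h2 : f sT ≤ f s + f s₀ := by
          have := hfle sT s le_rfl hssT.le; linarith [hfpos s₀ hs₀.1.le]
        nlinarith [mul_nonneg hμpos.le (sub_nonneg.2 hs.1.le), sub_nonneg.2 hs.1.le]
      have hsqs : 0 < Real.sqrt (f s ^ 2 - f s₀ ^ 2) := by
        have h1 : f s₀ < f s := hfmono (mem_Ici.2 hs₀.1.le) (mem_Ici.2 hssT.le) hs.1
        exact Real.sqrt_pos.2 (by nlinarith)
      calc g s / f s * f s₀ / Real.sqrt (f s ^ 2 - f s₀ ^ 2)
          ≤ (Hd / Real.sqrt (s₀ - sT) / f sT * f d) /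
            (Real.sqrt (μ * f sT) * Real.sqrt (s - s₀)) :=
            div_le_div₀ (by positivity) hnum
              (mul_pos hsqμ (Real.sqrt_pos.2 (sub_pos.2 hs.1))) hden
        _ = Hd / Real.sqrt (s₀ - sT) / f sT * f d / Real.sqrt (μ * f sT) /
            Real.sqrt (s - s₀) := (div_div _ _ _).symm
    · -- the tail (d, ∞)
      have hψ : IntegrableOn (fun s => f b / Real.sqrt ρ * (g s / f s ^ 2)) (Ioi d) :=
        (hcint.mono_set (Ioi_subset_Ioi hcd.le)).const_mul _
      refine Integrable.mono hψ (((hGcont s₀ hs₀.1).mono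
        (Ioi_subset_Ioi hs₀d.le)).aestronglyMeasurable measurableSet_Ioi) ?_
      rw [ae_restrict_iff' measurableSet_Ioi]
      refine ae_of_all _ fun s hs => ?_
      have hds : d < s := hs
      have hssT : sT < s := hsTd.trans hds
      have hfs : 0 < f s := hfpos s hssT.le
      have hfds : f d ≤ f s := hfle d s hsTd.le hds.le
      have hfs0b : f s₀ ≤ f b := hfle s₀ b hs₀.1.le hs₀.2.le
      have hfs0 : 0 < f s₀ := hfpos s₀ hs₀.1.le
      have hXlb : ρ * f s ^ 2 ≤ f s ^ 2 - f s₀ ^ 2 := by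
        have e1 : f s₀ ^ 2 ≤ f b ^ 2 := by nlinarith
        have e2 : f b ≤ f b / f d * f s := by
          rw [div_mul_eq_mul_div, le_div_iff₀ hfdpos]; nlinarith
        have e3 : f b ^ 2 ≤ (f b / f d) ^ 2 * f s ^ 2 := by
          nlinarith [div_nonneg hfbpos.le hfdpos.le]
        simp only [hρdef]; nlinarith
      have hsqρ : 0 < Real.sqrt ρ := Real.sqrt_pos.2 hρpos
      have hsqX : Real.sqrt ρ * f s ≤ Real.sqrt (f s ^ 2 - f s₀ ^ 2) := by
        have h1 := Real.sqrt_le_sqrt hXlb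
        rwa [Real.sqrt_mul hρpos.le, Real.sqrt_sq hfs.le] at h1
      have hnn := hGnn s₀ hs₀.1 s (hs₀d.trans hds)
      rw [Real.norm_eq_abs, abs_of_nonneg hnn]
      have hgs := hgnn s hssT
      calc g s / f s * f s₀ / Real.sqrt (f s ^ 2 - f s₀ ^ 2)
          ≤ g s / f s * f b / (Real.sqrt ρ * f s) :=
            div_le_div₀ (mul_nonneg (div_nonneg hgs hfs.le) hfbpos.le)
              (mul_le_mul_of_nonneg_left hfs0b (div_nonneg hgs hfs.le))
              (mul_pos hsqρ hfs) hsqX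
        _ = f b / Real.sqrt ρ * (g s / f s ^ 2) := by
            field_simp
        _ ≤ ‖f b / Real.sqrt ρ * (g s / f s ^ 2)‖ := le_abs_self _
  -- the constant in the lower bound for L
  set C₀ : ℝ := h sT / 2 / f b * f sT / Real.sqrt (2 * M * f b) with hC₀def
  have hsq2M : 0 < Real.sqrt (2 * M * f b) := Real.sqrt_pos.2 (by positivity)
  have hC₀pos : 0 < C₀ :=
    div_pos (mul_pos (div_pos (by linarith) hfbpos) hfT) hsq2M
  -- lower bound on L
  have hLlow : ∀ s₀ ∈ Ioo sT b,
      2 * (C₀ * (Real.log (b - sT) - Real.log (s₀ - sT))) ≤ L s₀ := by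
    intro s₀ hs₀
    have hs₀b : s₀ < b := hs₀.2
    have hpt : ∀ s ∈ Ioc s₀ b, C₀ * (s - sT)⁻¹ ≤
        g s / f s * f s₀ / Real.sqrt (f s ^ 2 - f s₀ ^ 2) := by
      intro s hs
      have hssT : sT < s := hs₀.1.trans hs.1
      have hsq : 0 < Real.sqrt (s - sT) := Real.sqrt_pos.2 (sub_pos.2 hssT)
      have hfs : 0 < f s := hfpos s hssT.le
      have hfsb : f s ≤ f b := hfle s b hssT.le hs.2
      have hnum : h sT / 2 / Real.sqrt (s - sT) / f b * f sT ≤ g s / f s * f s₀ := by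
        have hg1 : h sT / 2 / Real.sqrt (s - sT) ≤ g s := by
          rw [hgdef s hssT]
          exact div_le_div₀ (hhnn s hssT.le) (hbsub ⟨hssT.le, hs.2⟩).le hsq le_rfl
        have hg2 : h sT / 2 / Real.sqrt (s - sT) / f b ≤ g s / f s :=
          div_le_div₀ (hgnn s hssT) hg1 hfs hfsb
        exact mul_le_mul hg2 (hfle sT s₀ le_rfl hs₀.1.le) hfT.le
          (div_nonneg (hgnn s hssT) hfs.le)
      have hden : Real.sqrt (f s ^ 2 - f s₀ ^ 2) ≤
          Real.sqrt (2 * M * f b) * Real.sqrt (s - sT) := by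
        rw [← Real.sqrt_mul (by positivity)]
        apply Real.sqrt_le_sqrt
        have h1 : f s - f s₀ ≤ M * (s - s₀) := hupp s₀ s hs₀.1.le hs.1.le (hs.2.trans hbd.le)
        have h2 : f s + f s₀ ≤ 2 * f b := by
          have := hfle s₀ b hs₀.1.le hs₀b.le; linarith
        have h3 : s - s₀ ≤ s - sT := by linarith [hs₀.1]
        have h4 : 0 ≤ f s - f s₀ := by
          have := hfle s₀ s hs₀.1.le hs.1.le; linarith
        have hsum0 : 0 ≤ f s + f s₀ := by
          linarith [hfpos s hssT.le, hfpos s₀ hs₀.1.le]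
        have h10 : 0 ≤ M * (s - s₀) := mul_nonneg hMpos.le (by linarith [hs.1.le])
        have hprod : (f s - f s₀) * (f s + f s₀) ≤ M * (s - s₀) * (2 * f b) :=
          mul_le_mul h1 h2 hsum0 h10
        have h11 : M * (s - s₀) * (2 * f b) ≤ M * (s - sT) * (2 * f b) :=
          mul_le_mul_of_nonneg_right (mul_le_mul_of_nonneg_left h3 hMpos.le)
            (by linarith [hfbpos])
        nlinarith [hprod, h11]
      have hXpos : 0 < Real.sqrt (f s ^ 2 - f s₀ ^ 2) := by
        have h1 : f s₀ < f s := hfmono (mem_Ici.2 hs₀.1.le) (mem_Ici.2 hssT.le) hs.1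
        have h2 := mul_pos (sub_pos.2 h1) (add_pos (hfpos s hssT.le) (hfpos s₀ hs₀.1.le))
        exact Real.sqrt_pos.2 (by nlinarith [h2])
      have hkey : (h sT / 2 / Real.sqrt (s - sT) / f b * f sT) /
          (Real.sqrt (2 * M * f b) * Real.sqrt (s - sT)) = C₀ * (s - sT)⁻¹ := by
        have hss : Real.sqrt (s - sT) * Real.sqrt (s - sT) = s - sT :=
          Real.mul_self_sqrt (by linarith)
        rw [hC₀def, ← hss]
        have ht : Real.sqrt (s - sT) ≠ 0 := hsq.ne'
        have hq : Real.sqrt (2 * M * f b) ≠ 0 := hsq2M.ne'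
        have hfbne : f b ≠ 0 := hfbpos.ne'
        field_simp
        ring
        rw [Real.sqrt_sq hsq.le]
      calc C₀ * (s - sT)⁻¹
          = (h sT / 2 / Real.sqrt (s - sT) / f b * f sT) /
            (Real.sqrt (2 * M * f b) * Real.sqrt (s - sT)) := hkey.symm
        _ ≤ g s / f s * f s₀ / Real.sqrt (f s ^ 2 - f s₀ ^ 2) :=
            div_le_div₀ (mul_nonneg (div_nonneg (hgnn s hssT) hfs.le)
              (hfpos s₀ hs₀.1.le).le) hnum hXpos hden
    have hint1 : IntegrableOn (fun s => C₀ * (s - sT)⁻¹) (Ioc s₀ b) := by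
      have hco : ContinuousOn (fun s : ℝ => C₀ * (s - sT)⁻¹) (uIcc s₀ b) := by
        rw [uIcc_of_le hs₀b.le]
        exact continuousOn_const.mul ((continuousOn_id.sub continuousOn_const).inv₀
          fun x hx => ne_of_gt (by linarith [hx.1, hs₀.1] : (0:ℝ) < x - sT))
      exact (intervalIntegrable_iff_integrableOn_Ioc_of_le hs₀b.le).1 hco.intervalIntegrable
    have hint2 : IntegrableOn
        (fun s => g s / f s * f s₀ / Real.sqrt (f s ^ 2 - f s₀ ^ 2)) (Ioc s₀ b) :=
      (hGint s₀ hs₀).mono_set Ioc_subset_Ioi_self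
    have hi1 : ∫ s in Ioc s₀ b, C₀ * (s - sT)⁻¹ ≤
        ∫ s in Ioc s₀ b, g s / f s * f s₀ / Real.sqrt (f s ^ 2 - f s₀ ^ 2) :=
      setIntegral_mono_on hint1 hint2 measurableSet_Ioc hpt
    have hi2 : ∫ s in Ioc s₀ b, g s / f s * f s₀ / Real.sqrt (f s ^ 2 - f s₀ ^ 2) ≤
        ∫ s in Ioi s₀, g s / f s * f s₀ / Real.sqrt (f s ^ 2 - f s₀ ^ 2) := by
      apply setIntegral_mono_set (hGint s₀ hs₀) _
        (HasSubset.Subset.eventuallyLE Ioc_subset_Ioi_self)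
      filter_upwards [ae_restrict_mem measurableSet_Ioi] with s hs
      exact hGnn s₀ hs₀.1 s hs
    have hi3 : ∫ s in Ioc s₀ b, C₀ * (s - sT)⁻¹ =
        C₀ * (Real.log (b - sT) - Real.log (s₀ - sT)) := by
      rw [integral_const_mul, aux_log_integral hs₀.1 hs₀b.le]
    rw [hL s₀]
    linarith
  -- divergence of L
  have hsub0 : Tendsto (fun s₀ => s₀ - sT) (nhdsWithin sT (Ioi sT))
      (nhdsWithin 0 (Ioi 0)) := by
    apply tendsto_nhdsWithin_iff.2
    constructor
    · have h1 : Tendsto (fun s₀ : ℝ => s₀ - sT) (nhds sT) (nhds (sT - sT)) :=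
        (continuous_id.sub continuous_const).tendsto sT
      rw [sub_self] at h1
      exact h1.mono_left nhdsWithin_le_nhds
    · filter_upwards [self_mem_nhdsWithin] with x hx
      exact sub_pos.2 (mem_Ioi.1 hx)
  have hlogbot : Tendsto (fun s₀ => Real.log (s₀ - sT)) (nhdsWithin sT (Ioi sT)) atBot :=
    Real.tendsto_log_nhdsGT_zero.comp hsub0
  have hφtop : Tendsto (fun s₀ => 2 * (C₀ * (Real.log (b - sT) - Real.log (s₀ - sT))))
      (nhdsWithin sT (Ioi sT)) atTop := by
    have h1 : Tendsto (fun s₀ => Real.log (b - sT) - Real.log (s₀ - sT))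
        (nhdsWithin sT (Ioi sT)) atTop := by
      have h2 := tendsto_neg_atBot_atTop.comp hlogbot
      have h3 := tendsto_atTop_add_const_left _ (Real.log (b - sT)) h2
      simpa [sub_eq_add_neg, Function.comp] using h3
    exact (h1.const_mul_atTop hC₀pos).const_mul_atTop two_pos
  have hLtop : Tendsto L (nhdsWithin sT (Ioi sT)) atTop := by
    apply tendsto_atTop_mono' _ _ hφtop
    filter_upwards [Ioo_mem_nhdsGT_of_mem (left_mem_Ico.2 hsTb)] with s₀ hs₀
    exact hLlow s₀ hs₀
  refine ⟨hLtop, ?_⟩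
  -- integrability of g and g/f² near the horizon
  have hIocIci : Ioc sT d ⊆ Ici sT := Ioc_subset_Icc_self.trans Icc_subset_Ici_self
  have hgIoc : IntegrableOn g (Ioc sT d) := by
    apply aux_integrableOn_of_inv_sqrt_bound (C := Hd) (hgcont.mono Ioc_subset_Ioi_self)
    intro s hs
    rw [Real.norm_eq_abs, abs_of_nonneg (hgnn s hs.1), hgdef s hs.1]
    exact div_le_div₀ hHdpos.le (hHd s ⟨hs.1.le, hs.2⟩)
      (Real.sqrt_pos.2 (sub_pos.2 hs.1)) le_rfl
  have hgf2near : IntegrableOn (fun s => g s / f s ^ 2) (Ioc sT d) := by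
    apply aux_integrableOn_of_inv_sqrt_bound (C := Hd / f sT ^ 2)
    · exact (hgcont.mono Ioc_subset_Ioi_self).div
        ((hf.continuousOn.mono hIocIci).pow 2)
        fun x hx => pow_ne_zero 2 (hfpos x (hIocIci hx)).ne'
    · intro s hs
      have hfs := hfpos s (hIocIci hs)
      have hg1 : g s ≤ Hd / Real.sqrt (s - sT) := by
        rw [hgdef s hs.1]
        exact div_le_div₀ hHdpos.le (hHd s ⟨hs.1.le, hs.2⟩)
          (Real.sqrt_pos.2 (sub_pos.2 hs.1)) le_rfl
      rw [Real.norm_eq_abs, abs_of_nonneg (div_nonneg (hgnn s hs.1) (by positivity))]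
      calc g s / f s ^ 2 ≤ Hd / Real.sqrt (s - sT) / f sT ^ 2 :=
            div_le_div₀ (by positivity) hg1 (by positivity)
              (pow_le_pow_left₀ hfT.le (hfle sT s le_rfl hs.1.le) 2)
        _ = Hd / f sT ^ 2 / Real.sqrt (s - sT) := div_right_comm _ _ _
  have hgf2 : IntegrableOn (fun s => g s / f s ^ 2) (Ioi sT) := by
    rw [← Ioc_union_Ioi_eq_Ioi hsTd.le]
    exact hgf2near.union (hcint.mono_set (Ioi_subset_Ioi hcd.le))
  set ψ : ℝ → ℝ := fun s => f b ^ 2 * (g s / f s ^ 2) with hψdef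
  have hψint : IntegrableOn ψ (Ioi sT) := hgf2.const_mul _
  set B₁ : ℝ := ∫ s in Ioi sT, ψ s with hB₁
  set B₂ : ℝ := ∫ s in Ioc sT d, g s with hB₂
  -- bound on the second term of E
  have hI2 : ∀ s₀ ∈ Ioo sT b,
      ‖∫ s in Ioi s₀, g s / f s * (Real.sqrt (f s ^ 2 - f s₀ ^ 2) - f s)‖ ≤ B₁ := by
    intro s₀ hs₀
    have hψs₀ : IntegrableOn ψ (Ioi s₀) := hψint.mono_set (Ioi_subset_Ioi hs₀.1.le)
    have hb1 : ‖∫ s in Ioi s₀, g s / f s * (Real.sqrt (f s ^ 2 - f s₀ ^ 2) - f s)‖ ≤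
        ∫ s in Ioi s₀, ψ s := by
      apply norm_integral_le_of_norm_le hψs₀
      filter_upwards [ae_restrict_mem measurableSet_Ioi] with s hs
      have hssT : sT < s := hs₀.1.trans hs
      have hfs := hfpos s hssT.le
      have hfs0 := hfpos s₀ hs₀.1.le
      have hfs0s : f s₀ < f s := hfmono (mem_Ici.2 hs₀.1.le) (mem_Ici.2 hssT.le) hs
      have hX0 : 0 ≤ f s ^ 2 - f s₀ ^ 2 := by nlinarith
      have hsqle : Real.sqrt (f s ^ 2 - f s₀ ^ 2) ≤ f s := by
        calc Real.sqrt (f s ^ 2 - f s₀ ^ 2) ≤ Real.sqrt (f s ^ 2) :=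
              Real.sqrt_le_sqrt (by nlinarith)
          _ = f s := Real.sqrt_sq hfs.le
      have hkey : f s - Real.sqrt (f s ^ 2 - f s₀ ^ 2) ≤ f s₀ ^ 2 / f s := by
        rw [le_div_iff₀ hfs]
        have hmul : f s ^ 2 - f s₀ ^ 2 ≤ Real.sqrt (f s ^ 2 - f s₀ ^ 2) * f s := by
          have h7 := mul_le_mul_of_nonneg_left hsqle
            (Real.sqrt_nonneg (f s ^ 2 - f s₀ ^ 2))
          rw [Real.mul_self_sqrt hX0] at h7
          exact h7
        have hexp : (f s - Real.sqrt (f s ^ 2 - f s₀ ^ 2)) * f s =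
            f s ^ 2 - Real.sqrt (f s ^ 2 - f s₀ ^ 2) * f s := by ring
        rw [hexp]
        linarith
      have hgs := hgnn s hssT
      rw [Real.norm_eq_abs, abs_mul, abs_of_nonneg (div_nonneg hgs hfs.le),
        abs_of_nonpos (by linarith : Real.sqrt (f s ^ 2 - f s₀ ^ 2) - f s ≤ 0)]
      have hstep : g s / f s * (f s - Real.sqrt (f s ^ 2 - f s₀ ^ 2)) ≤
          g s / f s * (f s₀ ^ 2 / f s) :=
        mul_le_mul_of_nonneg_left hkey (div_nonneg hgs hfs.le)
      have heq : g s / f s * (f s₀ ^ 2 / f s) = f s₀ ^ 2 * (g s / f s ^ 2) := by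
        have hfsne : f s ≠ 0 := hfs.ne'
        field_simp
      have hlast : f s₀ ^ 2 * (g s / f s ^ 2) ≤ f b ^ 2 * (g s / f s ^ 2) := by
        apply mul_le_mul_of_nonneg_right _ (div_nonneg hgs (by positivity))
        have h5 : f s₀ ≤ f b := hfle s₀ b hs₀.1.le hs₀.2.le
        nlinarith
      have hgoal : g s / f s * -(Real.sqrt (f s ^ 2 - f s₀ ^ 2) - f s) =
          g s / f s * (f s - Real.sqrt (f s ^ 2 - f s₀ ^ 2)) := by ring
      rw [hgoal]
      calc g s / f s * (f s - Real.sqrt (f s ^ 2 - f s₀ ^ 2))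
          ≤ g s / f s * (f s₀ ^ 2 / f s) := hstep
        _ = f s₀ ^ 2 * (g s / f s ^ 2) := heq
        _ ≤ f b ^ 2 * (g s / f s ^ 2) := hlast
        _ = ψ s := rfl
    have hb2 : ∫ s in Ioi s₀, ψ s ≤ B₁ := by
      apply setIntegral_mono_set hψint _
        (HasSubset.Subset.eventuallyLE (Ioi_subset_Ioi hs₀.1.le))
      filter_upwards [ae_restrict_mem measurableSet_Ioi] with s hs
      exact mul_nonneg (by positivity) (div_nonneg (hgnn s hs) (by positivity))
    linarith
  -- bound on the third term of E
  have hJ : ∀ s₀ ∈ Ioo sT b, ‖∫ s in Ioo sT s₀, g s‖ ≤ B₂ := by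
    intro s₀ hs₀
    have hsub : Ioo sT s₀ ⊆ Ioc sT d := fun x hx =>
      ⟨hx.1, hx.2.le.trans (hs₀.2.le.trans hbd.le)⟩
    have hgI : IntegrableOn g (Ioo sT s₀) := hgIoc.mono_set hsub
    have h1 : ‖∫ s in Ioo sT s₀, g s‖ ≤ ∫ s in Ioo sT s₀, g s := by
      apply norm_integral_le_of_norm_le hgI
      filter_upwards [ae_restrict_mem measurableSet_Ioo] with s hs
      rw [Real.norm_eq_abs, abs_of_nonneg (hgnn s hs.1)]
    have h2 : ∫ s in Ioo sT s₀, g s ≤ B₂ := by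
      apply setIntegral_mono_set hgIoc _ (HasSubset.Subset.eventuallyLE hsub)
      filter_upwards [ae_restrict_mem measurableSet_Ioc] with s hs
      exact hgnn s hs.1
    linarith
  -- final limit computation
  have hfc : Tendsto f (nhdsWithin sT (Ioi sT)) (nhds (f sT)) :=
    (hf.continuousOn sT self_mem_Ici).mono Ioi_subset_Ici_self
  have hRb : ∀ᶠ s₀ in nhdsWithin sT (Ioi sT),
      ‖E s₀ - f s₀ * L s₀‖ ≤ 2 * B₁ + 2 * B₂ := by
    filter_upwards [Ioo_mem_nhdsGT_of_mem (left_mem_Ico.2 hsTb)] with s₀ hs₀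
    have hEq : E s₀ - f s₀ * L s₀ =
        2 * (∫ s in Ioi s₀, g s / f s * (Real.sqrt (f s ^ 2 - f s₀ ^ 2) - f s)) -
        2 * ∫ s in Ioo sT s₀, g s := by
      rw [hE s₀]; ring
    rw [hEq]
    calc ‖2 * (∫ s in Ioi s₀, g s / f s * (Real.sqrt (f s ^ 2 - f s₀ ^ 2) - f s)) -
            2 * ∫ s in Ioo sT s₀, g s‖
        ≤ ‖2 * (∫ s in Ioi s₀, g s / f s * (Real.sqrt (f s ^ 2 - f s₀ ^ 2) - f s))‖ +
          ‖2 * ∫ s in Ioo sT s₀, g s‖ := norm_sub_le _ _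
      _ = 2 * ‖∫ s in Ioi s₀, g s / f s * (Real.sqrt (f s ^ 2 - f s₀ ^ 2) - f s)‖ +
          2 * ‖∫ s in Ioo sT s₀, g s‖ := by
          rw [norm_mul, norm_mul]; norm_num
      _ ≤ 2 * B₁ + 2 * B₂ := by
          have h1 := hI2 s₀ hs₀
          have h2 := hJ s₀ hs₀
          linarith
  have hq : Tendsto (fun s₀ => (E s₀ - f s₀ * L s₀) / L s₀)
      (nhdsWithin sT (Ioi sT)) (nhds 0) := by
    apply squeeze_zero_norm' _ (tendsto_const_nhds.div_atTop hLtop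
      (a := 2 * B₁ + 2 * B₂))
    filter_upwards [hRb, hLtop.eventually_ge_atTop 1] with s₀ h1 h2
    have hLpos : 0 < L s₀ := lt_of_lt_of_le one_pos h2
    rw [norm_div, Real.norm_eq_abs (L s₀), abs_of_pos hLpos]
    exact (div_le_div_iff_of_pos_right hLpos).2 h1
  have hfinal := hfc.add hq
  rw [add_zero] at hfinal
  apply Tendsto.congr' _ hfinal
  filter_upwards [hLtop.eventually_ge_atTop 1] with s₀ h2
  have hLne : L s₀ ≠ 0 := ne_of_gt (lt_of_lt_of_le one_pos h2)
  field_simp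
  ring
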